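/- Let γ : [0,n] → V be continuous and linear on each integer interval [k, k+1] (V a Banach space), and p ∈ [1,∞). Then for any finite partition 0 = t_0 < t_1 < ⋯ < t_K = n of [0,n] by real numbers, there exists a partition by integers 0 = n_0 < n_1 < ⋯ < n_J = n such that Σ_{k=1}^K ‖γ(t_k) − γ(t_{k−1})‖^p ≤ Σ_{j=1}^J ‖γ(n_j) − γ(n_{j−1})‖^p. Consequently, the p-variation of γ on [0,n] is attained by taking the supremum only over integer partitions. -/

import Mathlib

open Set ENNReal

set_option linter.unusedSectionVars false


section aux
variable {V : Type*} [NormedAddCommGroup V] [NormedSpace ℝ V]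

private lemma rpow_combo {p θ x y : ℝ} (hp : 1 ≤ p) (h0 : 0 ≤ θ) (h1 : θ ≤ 1)
    (hx : 0 ≤ x) (hy : 0 ≤ y) :
    ((1-θ)*x + θ*y) ^ p ≤ (1-θ)*x^p + θ*y^p := by
  have := (convexOn_rpow hp).2 (mem_Ici.2 hx) (mem_Ici.2 hy)
    (by linarith : (0:ℝ) ≤ 1 - θ) h0 (by ring)
  simpa [smul_eq_mul] using this

private lemma pair_convex {p : ℝ} (hp : 1 ≤ p) (X Y A B C : V) {θ : ℝ}
    (h0 : 0 ≤ θ) (h1 : θ ≤ 1) (hC : C = (1-θ) • A + θ • B) :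
    ‖C - X‖ ^ p + ‖Y - C‖ ^ p ≤
      max (‖A - X‖ ^ p + ‖Y - A‖ ^ p) (‖B - X‖ ^ p + ‖Y - B‖ ^ p) := by
  have hp0 : (0:ℝ) ≤ p := by linarith
  have key : ∀ P Q R : V, R = (1-θ) • P + θ • Q →
      ‖R‖ ^ p ≤ (1-θ) * ‖P‖ ^ p + θ * ‖Q‖ ^ p := by
    intro P Q R hR
    have h2 : ‖R‖ ≤ (1-θ) * ‖P‖ + θ * ‖Q‖ := by
      rw [hR]
      refine (norm_add_le _ _).trans ?_
      rw [norm_smul, norm_smul, Real.norm_eq_abs, Real.norm_eq_abs,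
        abs_of_nonneg (by linarith : (0:ℝ) ≤ 1 - θ), abs_of_nonneg h0]
    calc ‖R‖ ^ p ≤ ((1-θ) * ‖P‖ + θ * ‖Q‖) ^ p :=
          Real.rpow_le_rpow (norm_nonneg _) h2 hp0
      _ ≤ (1-θ) * ‖P‖ ^ p + θ * ‖Q‖ ^ p :=
          rpow_combo hp h0 h1 (norm_nonneg _) (norm_nonneg _)
  have k1 : ‖C - X‖ ^ p ≤ (1-θ) * ‖A - X‖ ^ p + θ * ‖B - X‖ ^ p := by
    refine key _ _ _ ?_
    rw [hC]; module
  have k2 : ‖Y - C‖ ^ p ≤ (1-θ) * ‖Y - A‖ ^ p + θ * ‖Y - B‖ ^ p := by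
    refine key _ _ _ ?_
    rw [hC]; module
  set u := ‖A - X‖ ^ p + ‖Y - A‖ ^ p with hu
  set v := ‖B - X‖ ^ p + ‖Y - B‖ ^ p with hv
  have hmu : u ≤ max u v := le_max_left _ _
  have hmv : v ≤ max u v := le_max_right _ _
  nlinarith [k1, k2]

private lemma affine_interp (γ : ℝ → V)
    (hlin : ∀ k : ℕ, ∀ s ∈ Icc (k : ℝ) (k + 1), γ s = γ k + (s - k) • (γ (k + 1) - γ k))
    (k : ℕ) {a b θ : ℝ} (ha : a ∈ Icc (k:ℝ) (k+1)) (hb : b ∈ Icc (k:ℝ) (k+1))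
    (h0 : 0 ≤ θ) (h1 : θ ≤ 1) :
    γ ((1-θ)*a + θ*b) = (1-θ) • γ a + θ • γ b := by
  have hs : (1-θ)*a + θ*b ∈ Icc (k:ℝ) (k+1) := by
    constructor
    · nlinarith [ha.1, hb.1]
    · nlinarith [ha.2, hb.2]
  rw [hlin k _ hs, hlin k a ha, hlin k b hb]
  module

end aux
section aux2
open scoped Classical
variable {V : Type*} [NormedAddCommGroup V] [NormedSpace ℝ V]

private lemma sum_update_le (γ : ℝ → V) (p : ℝ) (K i : ℕ) (hi1 : 1 ≤ i) (hiK : i < K)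
    (t : ℕ → ℝ) (c : ℝ)
    (hpair : ‖γ (t i) - γ (t (i-1))‖^p + ‖γ (t (i+1)) - γ (t i)‖^p ≤
             ‖γ c - γ (t (i-1))‖^p + ‖γ (t (i+1)) - γ c‖^p) :
    ∑ k ∈ Finset.range K, ‖γ (t (k+1)) - γ (t k)‖^p ≤
    ∑ k ∈ Finset.range K, ‖γ (Function.update t i c (k+1)) - γ (Function.update t i c k)‖^p := by
  have h1 : i - 1 ∈ Finset.range K := Finset.mem_range.2 (by omega)
  have h2 : i ∈ (Finset.range K).erase (i-1) := by
    simp only [Finset.mem_erase, Finset.mem_range]; omega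
  have dec : ∀ f : ℕ → ℝ, ∑ k ∈ Finset.range K, f k =
      ∑ k ∈ ((Finset.range K).erase (i-1)).erase i, f k + f i + f (i-1) := by
    intro f
    rw [Finset.sum_erase_add _ _ h2, Finset.sum_erase_add _ _ h1]
  have dL := dec (fun k => ‖γ (t (k+1)) - γ (t k)‖^p)
  have dR := dec (fun k => ‖γ (Function.update t i c (k+1)) - γ (Function.update t i c k)‖^p)
  beta_reduce at dL dR
  have e1 : Function.update t i c (i-1) = t (i-1) := Function.update_of_ne (by omega) _ _
  have e2 : i - 1 + 1 = i := by omega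
  have e3 : Function.update t i c i = c := Function.update_self _ _ _
  have e4 : Function.update t i c (i+1) = t (i+1) := Function.update_of_ne (by omega) _ _
  rw [e2, e1, e3, e4] at dR
  rw [e2] at dL
  have heq : ∑ k ∈ ((Finset.range K).erase (i-1)).erase i, ‖γ (t (k+1)) - γ (t k)‖^p =
      ∑ k ∈ ((Finset.range K).erase (i-1)).erase i,
        ‖γ (Function.update t i c (k+1)) - γ (Function.update t i c k)‖^p := by
    refine Finset.sum_congr rfl ?_
    intro k hk
    simp only [Finset.mem_erase, Finset.mem_range] at hk
    rw [Function.update_of_ne (by omega), Function.update_of_ne (by omega)]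
  rw [dL, dR, ← heq]
  linarith

private lemma sum_remove (γ : ℝ → V) (p : ℝ) (hp : 1 ≤ p) (K i : ℕ) (hiK : i < K)
    (t : ℕ → ℝ) (hdup : t i = t (i+1)) :
    ∑ k ∈ Finset.range K, ‖γ (t (k+1)) - γ (t k)‖^p =
    ∑ k ∈ Finset.range (K-1), ‖γ ((fun j => if j < i then t j else t (j+1)) (k+1)) -
        γ ((fun j => if j < i then t j else t (j+1)) k)‖^p := by
  have hfi : ‖γ (t (i+1)) - γ (t i)‖^p = 0 := by
    rw [hdup, sub_self, norm_zero, Real.zero_rpow (by linarith)]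
  rw [← Finset.sum_erase (Finset.range K) hfi]
  refine Finset.sum_nbij' (fun k => if k < i then k else k - 1)
    (fun k => if k < i then k else k + 1) ?_ ?_ ?_ ?_ ?_
  · intro a ha
    simp only [Finset.mem_erase, Finset.mem_range] at ha
    simp only [Finset.mem_range]
    split <;> omega
  · intro a ha
    simp only [Finset.mem_range] at ha
    simp only [Finset.mem_erase, Finset.mem_range]
    split <;> omega
  · intro a ha
    simp only [Finset.mem_erase, Finset.mem_range] at ha
    beta_reduce
    split <;> (try split) <;> omega
  · intro a ha
    simp only [Finset.mem_range] at ha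
    beta_reduce
    split <;> (try split) <;> omega
  · intro a ha
    simp only [Finset.mem_erase, Finset.mem_range] at ha
    beta_reduce
    by_cases h : a < i
    · rw [if_pos h, if_pos h]
      by_cases h2 : a + 1 < i
      · rw [if_pos h2]
      · have h3 : a + 1 = i := by omega
        rw [if_neg h2, h3, ← hdup]
    · have h3 : ¬ (a - 1 < i) := by omega
      have h4 : ¬ (a - 1 + 1 < i) := by omega
      rw [if_neg h, if_neg h3, if_neg h4,
        show a - 1 + 1 + 1 = a + 1 from by omega, show a - 1 + 1 = a from by omega]

private lemma count_remove (t : ℕ → ℝ) (K i : ℕ) (hi : i < K)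
    (hni : ¬∃ z:ℤ, t i = (z:ℝ)) (N : ℕ)
    (hc : ((Finset.range (K+1)).filter fun j => ¬∃ z:ℤ, t j = (z:ℝ)).card ≤ N + 1) :
    ((Finset.range (K-1+1)).filter fun j => ¬∃ z:ℤ, (if j < i then t j else t (j+1)) = (z:ℝ)).card ≤ N := by
  have hmem : i ∈ (Finset.range (K+1)).filter fun j => ¬∃ z:ℤ, t j = (z:ℝ) := by
    simp only [Finset.mem_filter, Finset.mem_range]
    exact ⟨by omega, hni⟩
  have hcard : (((Finset.range (K+1)).filter fun j => ¬∃ z:ℤ, t j = (z:ℝ)).erase i).card ≤ N := by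
    have h5 := Finset.card_erase_of_mem hmem
    omega
  refine le_trans ?_ hcard
  refine Finset.card_le_card_of_injOn (fun j => if j < i then j else j + 1) ?_ ?_
  · intro j hj
    simp only [Finset.mem_coe, Finset.mem_filter, Finset.mem_range] at hj
    simp only [Finset.mem_coe, Finset.mem_erase, Finset.mem_filter, Finset.mem_range]
    rcases hj with ⟨hj1, hj2⟩
    by_cases h : j < i
    · rw [if_pos h] at hj2 ⊢
      exact ⟨by omega, by omega, hj2⟩
    · rw [if_neg h] at hj2 ⊢
      exact ⟨by omega, by omega, hj2⟩
  · intro a _ b _ hab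
    beta_reduce at hab
    by_cases ha : a < i <;> by_cases hb : b < i
    · rwa [if_pos ha, if_pos hb] at hab
    · rw [if_pos ha, if_neg hb] at hab; omega
    · rw [if_neg ha, if_pos hb] at hab; omega
    · rw [if_neg ha, if_neg hb] at hab; omega

private lemma count_update (t : ℕ → ℝ) (K i : ℕ) (hi : i ≤ K)
    (hni : ¬∃ z:ℤ, t i = (z:ℝ)) (c : ℝ) (hcint : ∃ z:ℤ, c = (z:ℝ)) (N : ℕ)
    (hc : ((Finset.range (K+1)).filter fun j => ¬∃ z:ℤ, t j = (z:ℝ)).card ≤ N + 1) :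
    ((Finset.range (K+1)).filter fun j => ¬∃ z:ℤ, Function.update t i c j = (z:ℝ)).card ≤ N := by
  have hmem : i ∈ (Finset.range (K+1)).filter fun j => ¬∃ z:ℤ, t j = (z:ℝ) := by
    simp only [Finset.mem_filter, Finset.mem_range]
    exact ⟨by omega, hni⟩
  have hsub : ((Finset.range (K+1)).filter fun j => ¬∃ z:ℤ, Function.update t i c j = (z:ℝ)) ⊆
      (((Finset.range (K+1)).filter fun j => ¬∃ z:ℤ, t j = (z:ℝ)).erase i) := by
    intro j hj
    simp only [Finset.mem_filter, Finset.mem_range] at hj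
    rcases hj with ⟨hj1, hj2⟩
    have hji : j ≠ i := by
      intro h; subst h
      rw [Function.update_self] at hj2
      exact hj2 hcint
    rw [Function.update_of_ne hji] at hj2
    simp only [Finset.mem_erase, Finset.mem_filter, Finset.mem_range]
    exact ⟨hji, hj1, hj2⟩
  refine (Finset.card_le_card hsub).trans ?_
  have h5 := Finset.card_erase_of_mem hmem
  omega

private lemma mono_of_strict (t : ℕ → ℝ) (K : ℕ) (h : ∀ i < K, t i < t (i+1)) :
    ∀ a b, a ≤ b → b ≤ K → t a ≤ t b := by
  intro a b hab hbK
  induction b with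
  | zero => simp_all
  | succ b ih =>
    rcases Nat.lt_or_ge a (b+1) with h1 | h1
    · have : t a ≤ t b := ih (by omega) (by omega)
      exact this.trans (h b (by omega)).le
    · have : a = b + 1 := by omega
      subst this; rfl

private lemma strict_of_strict (t : ℕ → ℝ) (K : ℕ) (h : ∀ i < K, t i < t (i+1)) :
    ∀ a b, a < b → b ≤ K → t a < t b := by
  intro a b hab hbK
  have := mono_of_strict t K h (a+1) b hab hbK
  exact lt_of_lt_of_le (h a (by omega)) this

end aux2
section aux3
open scoped Classical
variable {V : Type*} [NormedAddCommGroup V] [NormedSpace ℝ V]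

private lemma all_int_case (n : ℕ) (γ : ℝ → V) (p : ℝ) (K : ℕ) (t : ℕ → ℝ)
    (h0 : t 0 = 0) (hK : t K = n) (hs : ∀ i < K, t i < t (i+1))
    (hall : ∀ j ≤ K, ∃ z : ℤ, t j = (z:ℝ)) :
    ∃ (J : ℕ) (m : ℕ → ℕ), m 0 = 0 ∧ m J = n ∧ (∀ j < J, m j < m (j + 1)) ∧
      ∑ k ∈ Finset.range K, ‖γ (t (k + 1)) - γ (t k)‖ ^ p ≤
        ∑ j ∈ Finset.range J, ‖γ ((m (j + 1) : ℕ) : ℝ) - γ ((m j : ℕ) : ℝ)‖ ^ p := by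
  refine ⟨K, fun j => ⌊t j⌋.toNat, ?_, ?_, ?_, ?_⟩
  case _ =>
    simp [h0]
  case _ =>
    simp [hK]
  all_goals {
    have hcast : ∀ j ≤ K, ((⌊t j⌋.toNat : ℕ) : ℝ) = t j := by
      intro j hj
      obtain ⟨z, hz⟩ := hall j hj
      have h0j : (0:ℝ) ≤ t j := by
        have := mono_of_strict t K hs 0 j (by omega) hj
        rw [h0] at this; linarith
      have hz0 : 0 ≤ z := by
        rw [hz] at h0j; exact_mod_cast h0j
      rw [hz, Int.floor_intCast]
      exact_mod_cast Int.toNat_of_nonneg hz0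
    first
    | { -- strictness
        intro j hj
        have h1 := hcast j (by omega)
        have h2 := hcast (j+1) (by omega)
        have := hs j hj
        have : ((⌊t j⌋.toNat : ℕ) : ℝ) < ((⌊t (j+1)⌋.toNat : ℕ) : ℝ) := by
          rw [h1, h2]; exact this
        exact_mod_cast this }
    | { -- sum
        refine le_of_eq (Finset.sum_congr rfl ?_)
        intro k hk
        simp only [Finset.mem_range] at hk
        rw [hcast k (by omega), hcast (k+1) (by omega)] }
  }

private lemma dedup_lemma (γ : ℝ → V) (p : ℝ) (hp : 1 ≤ p) (n : ℕ) :
    ∀ K (t : ℕ → ℝ), t 0 = 0 → t K = (n:ℝ) → (∀ i < K, t i ≤ t (i+1)) →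
    ∃ (K' : ℕ) (t' : ℕ → ℝ), t' 0 = 0 ∧ t' K' = (n:ℝ) ∧ (∀ i < K', t' i < t' (i+1)) ∧
      ∑ k ∈ Finset.range K, ‖γ (t (k+1)) - γ (t k)‖^p ≤
        ∑ k ∈ Finset.range K', ‖γ (t' (k+1)) - γ (t' k)‖^p := by
  intro K
  induction K using Nat.strong_induction_on with
  | _ K ih =>
    intro t h0 hK hmono
    by_cases hstrict : ∀ i < K, t i < t (i+1)
    · exact ⟨K, t, h0, hK, hstrict, le_rfl⟩
    · push_neg at hstrict
      obtain ⟨i, hiK, hile⟩ := hstrict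
      have hdup : t i = t (i+1) := le_antisymm (hmono i hiK) hile
      set t2 : ℕ → ℝ := fun j => if j < i then t j else t (j+1) with ht2
      have hsum := sum_remove γ p hp K i hiK t hdup
      have h20 : t2 0 = 0 := by
        simp only [ht2]
        by_cases h : 0 < i
        · rw [if_pos h]; exact h0
        · rw [if_neg h]
          have hi0 : i = 0 := by omega
          subst hi0
          have h1 : t (0+1) = 0 := hdup ▸ h0
          simpa using h1
      have h2K : t2 (K-1) = (n:ℝ) := by
        have : ¬ (K - 1 < i) := by omega
        simp only [ht2, if_neg this]
        rw [show K - 1 + 1 = K from by omega]; exact hK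
      have h2mono : ∀ j < K - 1, t2 j ≤ t2 (j+1) := by
        intro j hj
        simp only [ht2]
        by_cases h1 : j < i
        · rw [if_pos h1]
          by_cases h2 : j + 1 < i
          · rw [if_pos h2]; exact hmono j (by omega)
          · rw [if_neg h2]
            have : j + 1 = i := by omega
            rw [this, ← hdup, ← this]
            exact hmono j (by omega)
        · rw [if_neg h1, if_neg (by omega : ¬ j + 1 < i)]
          exact hmono (j+1) (by omega)
      obtain ⟨K', t', a1, a2, a3, a4⟩ := ih (K-1) (by omega) t2 h20 h2K h2mono
      exact ⟨K', t', a1, a2, a3, by rw [hsum]; exact a4⟩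

end aux3
section aux4
open scoped Classical
variable {V : Type*} [NormedAddCommGroup V] [NormedSpace ℝ V]

private lemma main_ind (n : ℕ) (γ : ℝ → V)
    (hlin : ∀ k : ℕ, ∀ s ∈ Icc (k : ℝ) (k + 1), γ s = γ k + (s - k) • (γ (k + 1) - γ k))
    (p : ℝ) (hp : 1 ≤ p) :
    ∀ (N K : ℕ) (t : ℕ → ℝ), t 0 = 0 → t K = (n:ℝ) → (∀ i < K, t i < t (i+1)) →
      ((Finset.range (K+1)).filter fun j => ¬∃ z:ℤ, t j = (z:ℝ)).card ≤ N →
      ∃ (J : ℕ) (m : ℕ → ℕ), m 0 = 0 ∧ m J = n ∧ (∀ j < J, m j < m (j + 1)) ∧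
        ∑ k ∈ Finset.range K, ‖γ (t (k + 1)) - γ (t k)‖ ^ p ≤
          ∑ j ∈ Finset.range J, ‖γ ((m (j + 1) : ℕ) : ℝ) - γ ((m j : ℕ) : ℝ)‖ ^ p := by
  intro N
  induction N with
  | zero =>
    intro K t h0 hK hs hcard
    refine all_int_case n γ p K t h0 hK hs ?_
    intro j hj
    by_contra hni
    have hmem : j ∈ (Finset.range (K+1)).filter fun j => ¬∃ z:ℤ, t j = (z:ℝ) := by
      simp only [Finset.mem_filter, Finset.mem_range]; exact ⟨by omega, hni⟩
    have := Finset.card_pos.2 ⟨j, hmem⟩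
    omega
  | succ N ih =>
    intro K t h0 hK hs hcard
    by_cases hall : ∀ j ≤ K, ∃ z : ℤ, t j = (z:ℝ)
    · exact all_int_case n γ p K t h0 hK hs hall
    push_neg at hall
    obtain ⟨j₀, hj₀K, hj₀⟩ := hall
    have hex : ∃ j, j ≤ K ∧ ¬∃ z : ℤ, t j = (z:ℝ) := ⟨j₀, hj₀K, not_exists.2 hj₀⟩
    obtain ⟨hiK, hni⟩ := Nat.find_spec hex
    set i := Nat.find hex with hidef
    have hmin : ∀ j, j < i → j ≤ K → ∃ z : ℤ, t j = (z:ℝ) := by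
      intro j hji hjK
      by_contra hcc
      exact Nat.find_min hex hji ⟨hjK, hcc⟩
    have hi0 : i ≠ 0 := by
      intro h
      exact hni (by rw [h, h0]; exact ⟨0, by norm_num⟩)
    have hiKne : i ≠ K := by
      intro h
      exact hni (by rw [h, hK]; exact ⟨(n:ℤ), by push_cast; ring⟩)
    have hi1 : 1 ≤ i := by omega
    have hiK' : i < K := by omega
    have hpos : 0 < t i := by
      have := strict_of_strict t K hs 0 i (by omega) (by omega)
      rw [h0] at this; exact this
    set k : ℕ := ⌊t i⌋.toNat with hkdef
    have hfl0 : 0 ≤ ⌊t i⌋ := Int.floor_nonneg.2 hpos.le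
    have hkr : (k:ℝ) = ((⌊t i⌋ : ℤ) : ℝ) := by
      rw [hkdef]; exact_mod_cast Int.toNat_of_nonneg hfl0
    have hk_le : (k:ℝ) ≤ t i := by rw [hkr]; exact Int.floor_le _
    have hk_lt : t i < (k:ℝ) + 1 := by
      rw [hkr]; exact Int.lt_floor_add_one _
    have hk_strict : (k:ℝ) < t i := by
      rcases lt_or_eq_of_le hk_le with h | h
      · exact h
      · exfalso; exact hni ⟨(k:ℤ), by rw [← h]; push_cast; ring⟩
    obtain ⟨z1, hz1⟩ := hmin (i-1) (by omega) (by omega)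
    have hprev_lt : t (i-1) < t i := by
      have := hs (i-1) (by omega)
      rwa [show i - 1 + 1 = i from by omega] at this
    have hnext_gt : t i < t (i+1) := hs i hiK'
    have hprev_le_k : t (i-1) ≤ (k:ℝ) := by
      rw [hz1, hkr]
      have : z1 ≤ ⌊t i⌋ := Int.le_floor.2 (by rw [← hz1]; exact hprev_lt.le)
      exact_mod_cast this
    set a : ℝ := (k:ℝ) with hadef
    set b : ℝ := min ((k:ℝ)+1) (t (i+1)) with hbdef
    have hti_le_b : t i ≤ b := le_min hk_lt.le hnext_gt.le
    have hab : a < b := lt_of_lt_of_le hk_strict hti_le_b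
    have hb_le : b ≤ (k:ℝ) + 1 := min_le_left _ _
    have hb_le2 : b ≤ t (i+1) := min_le_right _ _
    have ha_mem : a ∈ Icc ((k:ℝ)) ((k:ℝ)+1) := ⟨le_refl _, by linarith⟩
    have hb_mem : b ∈ Icc ((k:ℝ)) ((k:ℝ)+1) := ⟨by linarith, hb_le⟩
    set θ : ℝ := (t i - a)/(b - a) with hθdef
    have hθ0 : 0 ≤ θ := div_nonneg (by linarith) (by linarith)
    have hθ1 : θ ≤ 1 := (div_le_one (by linarith)).2 (by linarith)
    have hcomb : (1-θ)*a + θ*b = t i := by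
      have hba : b - a ≠ 0 := by linarith
      rw [hθdef]
      field_simp
      ring
    have hγti : γ (t i) = (1-θ) • γ a + θ • γ b := by
      rw [← hcomb]
      exact affine_interp γ hlin k ha_mem hb_mem hθ0 hθ1
    have hpairmax := pair_convex hp (γ (t (i-1))) (γ (t (i+1))) (γ a) (γ b) (γ (t i)) hθ0 hθ1 hγti
    set c : ℝ := if (‖γ b - γ (t (i-1))‖^p + ‖γ (t (i+1)) - γ b‖^p) ≤
        (‖γ a - γ (t (i-1))‖^p + ‖γ (t (i+1)) - γ a‖^p) then a else b with hcdef
    have hc_or : c = a ∨ c = b := by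
      rw [hcdef]; split
      · exact Or.inl rfl
      · exact Or.inr rfl
    have hpair : ‖γ (t i) - γ (t (i-1))‖^p + ‖γ (t (i+1)) - γ (t i)‖^p ≤
        ‖γ c - γ (t (i-1))‖^p + ‖γ (t (i+1)) - γ c‖^p := by
      rw [hcdef]; split
      · rename_i h; exact hpairmax.trans (le_of_eq (max_eq_left h))
      · rename_i h; exact hpairmax.trans (le_of_eq (max_eq_right (le_of_not_ge h)))
    have hc_lb : t (i-1) ≤ c := by
      rcases hc_or with h | h <;> rw [h]
      · exact hprev_le_k
      · linarith
    have hc_ub : c ≤ t (i+1) := by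
      rcases hc_or with h | h <;> rw [h]
      · linarith
      · exact hb_le2
    have hsum1 := sum_update_le γ p K i hi1 hiK' t c hpair
    by_cases hcase : c = t (i+1) ∨ c = t (i-1)
    · -- removal case
      set g : ℕ → ℝ := fun j => if j < i then t j else t (j+1) with hgdef
      have s0 : g 0 = 0 := by
        rw [hgdef]; simp only []
        rw [if_pos (by omega : 0 < i)]; exact h0
      have sK : g (K-1) = (n:ℝ) := by
        rw [hgdef]; simp only []
        rw [if_neg (by omega : ¬ K - 1 < i), show K - 1 + 1 = K from by omega]; exact hK
      have sstrict : ∀ j < K - 1, g j < g (j+1) := by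
        intro j hj
        rw [hgdef]; simp only []
        by_cases h1 : j < i
        · rw [if_pos h1]
          by_cases h2 : j + 1 < i
          · rw [if_pos h2]; exact hs j (by omega)
          · rw [if_neg h2]
            have h3 := strict_of_strict t K hs j (j+2) (by omega) (by omega)
            rwa [show j + 1 + 1 = j + 2 from by omega]
        · rw [if_neg h1, if_neg (by omega : ¬ j + 1 < i)]
          exact hs (j+1) (by omega)
      have scount : ((Finset.range (K-1+1)).filter fun j => ¬∃ z:ℤ, g j = (z:ℝ)).card ≤ N :=
        count_remove t K i hiK' hni N hcard
      obtain ⟨J, m, b1, b2, b3, b4⟩ := ih (K-1) g s0 sK sstrict scount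
      refine ⟨J, m, b1, b2, b3, le_trans (le_trans hsum1 ?_) b4⟩
      set t1 := Function.update t i c with ht1
      rcases hcase with hc1 | hc2
      · have hdup1 : t1 i = t1 (i+1) := by
          rw [ht1, Function.update_self, Function.update_of_ne (by omega)]
          exact hc1
        have hsum2 := sum_remove γ p hp K i hiK' t1 hdup1
        have hfeq : (fun j => if j < i then t1 j else t1 (j+1)) = g := by
          funext j; rw [hgdef]; simp only []
          by_cases h : j < i
          · rw [if_pos h, if_pos h, ht1, Function.update_of_ne (by omega)]
          · rw [if_neg h, if_neg h, ht1, Function.update_of_ne (by omega)]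
        rw [hfeq] at hsum2
        exact le_of_eq hsum2
      · have hdup2 : t1 (i-1) = t1 (i-1+1) := by
          rw [ht1, show i - 1 + 1 = i from by omega, Function.update_of_ne (by omega),
            Function.update_self]
          exact hc2.symm
        have hsum2 := sum_remove γ p hp K (i-1) (by omega) t1 hdup2
        have hfeq : (fun j => if j < i - 1 then t1 j else t1 (j+1)) = g := by
          funext j; rw [hgdef]; simp only []
          by_cases h : j < i - 1
          · rw [if_pos h, if_pos (by omega : j < i), ht1, Function.update_of_ne (by omega)]
          · by_cases h2 : j < i
            · have hji : j = i - 1 := by omega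
              rw [if_neg h, if_pos h2, ht1, show j + 1 = i from by omega,
                Function.update_self, hc2, hji]
            · rw [if_neg h, if_neg h2, ht1, Function.update_of_ne (by omega)]
        rw [hfeq] at hsum2
        exact le_of_eq hsum2
    · push_neg at hcase
      obtain ⟨hcne1, hcne2⟩ := hcase
      have hcint : ∃ z : ℤ, c = (z:ℝ) := by
        rcases hc_or with h | h
        · exact ⟨(k:ℤ), by rw [h, hadef]; push_cast; ring⟩
        · rcases min_cases ((k:ℝ)+1) (t (i+1)) with ⟨he, _⟩ | ⟨he, _⟩
          · exact ⟨(k:ℤ)+1, by rw [h, hbdef, he]; push_cast; ring⟩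
          · exact absurd (h.trans (hbdef.trans he)) hcne1
      set t1 := Function.update t i c with ht1
      have u0 : t1 0 = 0 := by
        rw [ht1, Function.update_of_ne (by omega)]; exact h0
      have uK : t1 K = (n:ℝ) := by
        rw [ht1, Function.update_of_ne (by omega)]; exact hK
      have hc_lb' : t (i-1) < c := lt_of_le_of_ne hc_lb (Ne.symm hcne2)
      have hc_ub' : c < t (i+1) := lt_of_le_of_ne hc_ub hcne1
      have ustrict : ∀ j, j < K → t1 j < t1 (j+1) := by
        intro j hj
        by_cases h1 : j + 1 = i
        · rw [ht1, Function.update_of_ne (by omega), h1, Function.update_self]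
          have hji : j = i - 1 := by omega
          rw [hji]; exact hc_lb'
        · by_cases h2 : j = i
          · rw [ht1, h2, Function.update_self, Function.update_of_ne (by omega)]
            exact hc_ub'
          · rw [ht1, Function.update_of_ne h2, Function.update_of_ne (by omega)]
            exact hs j hj
      have ucount := count_update t K i (by omega) hni c hcint N hcard
      obtain ⟨J, m, b1, b2, b3, b4⟩ := ih K t1 u0 uK ustrict ucount
      exact ⟨J, m, b1, b2, b3, le_trans hsum1 b4⟩
end aux4

/-- Let `γ : [0,n] → V` be the piecewise-linear interpolation of its values
at the integers `0, 1, …, n` and let `p ∈ [1,∞)`.  Then every finite partition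
`0 = t 0 < t 1 < ⋯ < t K = n` of `[0,n]` is dominated by an integer partition
`0 = m 0 < m 1 < ⋯ < m J = n`:
`∑ ‖γ(t (k+1)) − γ(t k)‖^p ≤ ∑ ‖γ(m (j+1)) − γ(m j)‖^p`.
Consequently the `p`-variation of `γ` on `[0,n]` (the supremum of the partition sums) is
attained as the supremum over integer partitions only. -/
theorem stmt19 {V : Type*} [NormedAddCommGroup V] [NormedSpace ℝ V]
    (n : ℕ) (hn : 1 ≤ n) (γ : ℝ → V)
    (hlin : ∀ k : ℕ, ∀ s ∈ Icc (k : ℝ) (k + 1),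
      γ s = γ k + (s - k) • (γ (k + 1) - γ k))
    (p : ℝ) (hp : 1 ≤ p) :
    (∀ (K : ℕ) (t : ℕ → ℝ), t 0 = 0 → t K = n → (∀ i < K, t i < t (i + 1)) →
      ∃ (J : ℕ) (m : ℕ → ℕ), m 0 = 0 ∧ m J = n ∧ (∀ j < J, m j < m (j + 1)) ∧
        ∑ k ∈ Finset.range K, ‖γ (t (k + 1)) - γ (t k)‖ ^ p ≤
          ∑ j ∈ Finset.range J, ‖γ (m (j + 1) : ℕ) - γ (m j : ℕ)‖ ^ p) ∧
    (⨆ (K : ℕ) (t : ℕ → ℝ)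
        (_ : t 0 = 0 ∧ t K = (n : ℝ) ∧ ∀ i < K, t i ≤ t (i + 1)),
        ENNReal.ofReal (∑ k ∈ Finset.range K, ‖γ (t (k + 1)) - γ (t k)‖ ^ p)) =
      (⨆ (J : ℕ) (m : ℕ → ℕ)
        (_ : m 0 = 0 ∧ m J = n ∧ ∀ j < J, m j ≤ m (j + 1)),
        ENNReal.ofReal (∑ j ∈ Finset.range J, ‖γ (m (j + 1) : ℕ) - γ (m j : ℕ)‖ ^ p)) := by
  classical
  constructor
  · intro K t h0 hK hs
    have hcard : ((Finset.range (K+1)).filter fun j => ¬∃ z:ℤ, t j = (z:ℝ)).card ≤ K + 1 := by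
      calc _ ≤ (Finset.range (K+1)).card := Finset.card_filter_le _ _
        _ = K + 1 := Finset.card_range _
    exact main_ind n γ hlin p hp (K+1) K t h0 hK hs hcard
  · apply le_antisymm
    · refine iSup_le fun K => iSup_le fun t => iSup_le fun h => ?_
      obtain ⟨h0, hK, hmono⟩ := h
      obtain ⟨K', t', a1, a2, a3, a4⟩ := dedup_lemma γ p hp n K t h0 hK hmono
      have hcard : ((Finset.range (K'+1)).filter fun j => ¬∃ z:ℤ, t' j = (z:ℝ)).card ≤ K' + 1 := by
        calc _ ≤ (Finset.range (K'+1)).card := Finset.card_filter_le _ _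
          _ = K' + 1 := Finset.card_range _
      obtain ⟨J, m, b1, b2, b3, b4⟩ := main_ind n γ hlin p hp (K'+1) K' t' a1 a2 a3 hcard
      refine le_trans (ENNReal.ofReal_le_ofReal (a4.trans b4)) ?_
      exact le_iSup_of_le J (le_iSup_of_le m
        (le_iSup_of_le ⟨b1, b2, fun j hj => (b3 j hj).le⟩ le_rfl))
    · refine iSup_le fun J => iSup_le fun m => iSup_le fun h => ?_
      obtain ⟨h0, hJ, hmono⟩ := h
      refine le_iSup_of_le J (le_iSup_of_le (fun j => ((m j : ℕ) : ℝ))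
        (le_iSup_of_le ⟨?_, ?_, ?_⟩ ?_))
      · simp [h0]
      · show ((m J : ℕ) : ℝ) = (n:ℝ)
        exact_mod_cast hJ
      · intro i hi
        show ((m i : ℕ) : ℝ) ≤ ((m (i+1) : ℕ) : ℝ)
        exact_mod_cast hmono i hi
      · exact le_rfl
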